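/- Let B be a standard Brownian motion on [0, T] and let 0 = t_1 < t_2 < … < t_J = T be quadrature nodes. Then the error of the trapezoidal rule applied to the data (t_j, B_{t_j})_{j=1}^J as an estimator of ∫_0^T B_t dt has mean zero and its mean squared error satisfies E[ ( ∫_0^T B_t dt − B_tr((t_j, B_{t_j})_{j=1}^J) )^2 ] = (1/12) ∑_{j=1}^{J−1} (t_{j+1} − t_j)^3. -/

import Mathlib

open MeasureTheory ProbabilityTheory Finset

/-- A standard Brownian motion on `[0, T]`: a stochastic process with measurable
marginals, continuous sample paths, `B 0 = 0` almost surely, and such that every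
finite linear combination of marginals at times in `[0, T]` is centered Gaussian
with covariances `E[B s * B t] = min s t` (Cramér–Wold formulation). -/
def IsStdBrownianMotion {Ω : Type*} [MeasurableSpace Ω] (P : Measure Ω)
    (B : ℝ → Ω → ℝ) (T : ℝ) : Prop :=
  (∀ s ∈ Set.Icc (0 : ℝ) T, Measurable (B s)) ∧
  (∀ ω, ContinuousOn (fun s => B s ω) (Set.Icc 0 T)) ∧
  (∀ᵐ ω ∂P, B 0 ω = 0) ∧
  ∀ (n : ℕ) (ts : Fin n → ℝ), (∀ i, ts i ∈ Set.Icc (0 : ℝ) T) →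
    ∀ c : Fin n → ℝ,
      P.map (fun ω => ∑ i, c i * B (ts i) ω)
        = gaussianReal 0 (Real.toNNReal (∑ i, ∑ j, c i * c j * min (ts i) (ts j)))

/-- The trapezoidal rule with nodes `t 0 < t 1 < ⋯ < t (J-1)` applied to values
`z 0, …, z (J-1)`. -/
noncomputable def trapezoid (J : ℕ) (t z : ℕ → ℝ) : ℝ :=
  (1 / 2) * ∑ j ∈ Finset.range (J - 1), (z (j + 1) + z j) * (t (j + 1) - t j)

section BMaux
open Real Filter Set intervalIntegral
open scoped NNReal ENNReal
set_option linter.unusedSectionVars false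


lemma tendsto_mul_exp_neg_sq {b : ℝ} (hb : 0 < b) :
    Tendsto (fun x : ℝ => x * rexp (-b * x ^ 2)) atTop (nhds 0) := by
  have h := rpow_mul_exp_neg_mul_sq_isLittleO_exp_neg hb 1
  have h2 : (fun x : ℝ => x ^ (1:ℝ) * rexp (-b * x ^ 2)) =ᶠ[atTop]
      (fun x : ℝ => x * rexp (-b * x ^ 2)) := by
    filter_upwards [eventually_gt_atTop 0] with x hx
    rw [rpow_one]
  have hexp : Tendsto (fun x : ℝ => rexp (-(1/2) * x)) atTop (nhds 0) := by
    have h1 : Tendsto (fun x : ℝ => x / 2) atTop atTop := tendsto_id.atTop_div_const (by norm_num)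
    have h2 := (tendsto_neg_atTop_atBot).comp h1
    have h3 := tendsto_exp_atBot.comp h2
    refine h3.congr (fun x => ?_)
    simp [Function.comp]; ring_nf
  exact Tendsto.congr' h2 (h.isBigO.trans_tendsto hexp)

lemma tendsto_mul_exp_neg_sq_bot {b : ℝ} (hb : 0 < b) :
    Tendsto (fun x : ℝ => x * rexp (-b * x ^ 2)) atBot (nhds 0) := by
  have h := (tendsto_mul_exp_neg_sq hb).comp tendsto_neg_atBot_atTop
  have : (fun x : ℝ => (-x) * rexp (-b * (-x) ^ 2)) = fun x : ℝ => -(x * rexp (-b * x ^ 2)) := by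
    funext x; ring_nf
  rw [Function.comp_def] at h
  rw [this] at h
  simpa using h.neg

lemma tendsto_exp_neg_sq_top {b : ℝ} (hb : 0 < b) :
    Tendsto (fun x : ℝ => rexp (-b * x ^ 2)) atTop (nhds 0) :=
  (exp_neg_mul_sq_isLittleO_exp_neg hb).isBigO.trans_tendsto tendsto_exp_neg_atTop_nhds_zero

lemma tendsto_exp_neg_sq_bot {b : ℝ} (hb : 0 < b) :
    Tendsto (fun x : ℝ => rexp (-b * x ^ 2)) atBot (nhds 0) := by
  have h := (tendsto_exp_neg_sq_top hb).comp tendsto_neg_atBot_atTop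
  rw [Function.comp_def] at h
  simpa using h

lemma integrable_sq_mul_exp_neg_sq {b : ℝ} (hb : 0 < b) :
    Integrable (fun x : ℝ => x ^ 2 * rexp (-b * x ^ 2)) := by
  have h := integrable_rpow_mul_exp_neg_mul_sq hb (s := 2) (by norm_num)
  have : (fun x : ℝ => x ^ (2:ℝ) * rexp (-b * x ^ 2)) = fun x : ℝ => x ^ 2 * rexp (-b * x ^ 2) := by
    funext x; rw [show (2:ℝ) = ((2:ℕ):ℝ) by norm_num, rpow_natCast]
  rwa [this] at h

lemma integral_mul_exp_neg_sq {b : ℝ} (hb : 0 < b) :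
    ∫ x : ℝ, x * rexp (-b * x ^ 2) = 0 := by
  have hderiv : ∀ x : ℝ, HasDerivAt (fun y : ℝ => -(2*b)⁻¹ * rexp (-b * y ^ 2))
      (x * rexp (-b * x ^ 2)) x := by
    intro x
    have h1 : HasDerivAt (fun y : ℝ => -b * y ^ 2) (-b * (2 * x)) x := by
      simpa using ((hasDerivAt_pow 2 x).const_mul (-b))
    have := (h1.exp).const_mul (-(2*b)⁻¹)
    refine this.congr_deriv ?_
    field_simp
  have hint : Integrable (fun x : ℝ => x * rexp (-b * x ^ 2)) := integrable_mul_exp_neg_mul_sq hb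
  have := integral_of_hasDerivAt_of_tendsto hderiv hint
    (((tendsto_exp_neg_sq_bot hb).const_mul (-(2*b)⁻¹)))
    (((tendsto_exp_neg_sq_top hb).const_mul (-(2*b)⁻¹)))
  simpa using this

lemma integral_sq_mul_exp_neg_sq {b : ℝ} (hb : 0 < b) :
    ∫ x : ℝ, x ^ 2 * rexp (-b * x ^ 2) = (2*b)⁻¹ * Real.sqrt (π / b) := by
  have hderiv : ∀ x : ℝ, HasDerivAt (fun y : ℝ => -(2*b)⁻¹ * (y * rexp (-b * y ^ 2)))
      (x ^ 2 * rexp (-b * x ^ 2) - (2*b)⁻¹ * rexp (-b * x ^ 2)) x := by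
    intro x
    have h1 : HasDerivAt (fun y : ℝ => -b * y ^ 2) (-b * (2 * x)) x := by
      simpa using ((hasDerivAt_pow 2 x).const_mul (-b))
    have h2 : HasDerivAt (fun y : ℝ => y * rexp (-b * y ^ 2))
        (1 * rexp (-b * x ^ 2) + x * (rexp (-b * x ^ 2) * (-b * (2 * x)))) x :=
      (hasDerivAt_id x).mul h1.exp
    have := h2.const_mul (-(2*b)⁻¹)
    refine this.congr_deriv ?_
    field_simp
    ring
  have hint : Integrable (fun x : ℝ => x ^ 2 * rexp (-b * x ^ 2) - (2*b)⁻¹ * rexp (-b * x ^ 2)) :=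
    (integrable_sq_mul_exp_neg_sq hb).sub ((integrable_exp_neg_mul_sq hb).const_mul _)
  have hF := integral_of_hasDerivAt_of_tendsto hderiv hint
    ((tendsto_mul_exp_neg_sq_bot hb).const_mul (-(2*b)⁻¹))
    ((tendsto_mul_exp_neg_sq hb).const_mul (-(2*b)⁻¹))
  rw [integral_sub (integrable_sq_mul_exp_neg_sq hb) ((integrable_exp_neg_mul_sq hb).const_mul _),
    MeasureTheory.integral_const_mul, integral_gaussian] at hF
  simp only [mul_zero, sub_self] at hF
  linarith [hF]

open scoped NNReal ENNReal

section aux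
variable {v : ℝ≥0}

lemma gaussianReal_integral_eq (μ : ℝ) (hv : v ≠ 0) (g : ℝ → ℝ) :
    ∫ x, g x ∂(gaussianReal μ v) = ∫ x, gaussianPDFReal μ v x * g x := by
  rw [gaussianReal_of_var_ne_zero μ hv]
  have hmeas : Measurable fun x => (gaussianPDFReal μ v x).toNNReal :=
    (measurable_gaussianPDFReal μ v).real_toNNReal
  have hd : (gaussianPDF μ v) = fun x => ((gaussianPDFReal μ v x).toNNReal : ℝ≥0∞) := by
    funext x; rfl
  rw [hd, integral_withDensity_eq_integral_smul hmeas]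
  congr 1
  funext x
  rw [NNReal.smul_def, smul_eq_mul, Real.coe_toNNReal _ (gaussianPDFReal_nonneg μ v x)]

lemma gaussianReal_integrable_eq (μ : ℝ) (hv : v ≠ 0) (g : ℝ → ℝ) :
    Integrable g (gaussianReal μ v) ↔ Integrable (fun x => gaussianPDFReal μ v x * g x) volume := by
  rw [gaussianReal_of_var_ne_zero μ hv]
  have hmeas : Measurable fun x => (gaussianPDFReal μ v x).toNNReal :=
    (measurable_gaussianPDFReal μ v).real_toNNReal
  have hd : (gaussianPDF μ v) = fun x => ((gaussianPDFReal μ v x).toNNReal : ℝ≥0∞) := by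
    funext x; rfl
  rw [hd, integrable_withDensity_iff_integrable_smul hmeas]
  constructor <;> intro h <;> refine h.congr (Eventually.of_forall fun x => ?_) <;>
    simp only [NNReal.smul_def, smul_eq_mul, Real.coe_toNNReal _ (gaussianPDFReal_nonneg μ v x)]

lemma gaussianPDFReal_centered (v : ℝ≥0) (x : ℝ) :
    gaussianPDFReal 0 v x = (√(2 * π * v))⁻¹ * rexp (-(2 * (v:ℝ))⁻¹ * x ^ 2) := by
  rw [gaussianPDFReal]
  congr 1
  rw [sub_zero]
  congr 1
  by_cases h : (v:ℝ) = 0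
  · simp [h]
  · field_simp

end aux

section moments
variable {v : ℝ≥0}

lemma my_integrable_dirac {f : ℝ → ℝ} (hf : Measurable f) (a : ℝ) :
    Integrable f (Measure.dirac a) := by
  refine ⟨hf.aestronglyMeasurable, ?_⟩
  rw [HasFiniteIntegral, lintegral_dirac]
  exact ENNReal.coe_lt_top

lemma b_pos (hv : v ≠ 0) : 0 < (2 * (v:ℝ))⁻¹ := by
  have : (0:ℝ) < v := lt_of_le_of_ne v.coe_nonneg (by exact_mod_cast (Ne.symm hv))
  positivity

lemma integrable_id_gaussianReal (v : ℝ≥0) :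
    Integrable (fun x : ℝ => x) (gaussianReal 0 v) := by
  by_cases hv : v = 0
  · rw [hv, gaussianReal_zero_var]; exact my_integrable_dirac measurable_id _
  · rw [gaussianReal_integrable_eq 0 hv]
    have hb := b_pos hv
    have := (integrable_mul_exp_neg_mul_sq hb).const_mul (√(2 * π * v))⁻¹
    refine this.congr (Eventually.of_forall fun x => ?_)
    simp only [gaussianPDFReal_centered]
    ring

lemma integral_id_gaussianReal0 : ∫ x, x ∂(gaussianReal 0 v) = 0 := by
  by_cases hv : v = 0
  · rw [hv, gaussianReal_zero_var, integral_dirac]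
  · rw [gaussianReal_integral_eq 0 hv]
    have hb := b_pos hv
    calc ∫ x, gaussianPDFReal 0 v x * x
        = ∫ x, (√(2 * π * v))⁻¹ * (x * rexp (-(2 * (v:ℝ))⁻¹ * x ^ 2)) := by
          congr 1; funext x; rw [gaussianPDFReal_centered]; ring
      _ = (√(2 * π * v))⁻¹ * ∫ x, x * rexp (-(2 * (v:ℝ))⁻¹ * x ^ 2) := MeasureTheory.integral_const_mul _ _
      _ = 0 := by rw [integral_mul_exp_neg_sq hb, mul_zero]

lemma integrable_sq_gaussianReal (v : ℝ≥0) :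
    Integrable (fun x : ℝ => x ^ 2) (gaussianReal 0 v) := by
  by_cases hv : v = 0
  · rw [hv, gaussianReal_zero_var]; exact my_integrable_dirac (by measurability) _
  · rw [gaussianReal_integrable_eq 0 hv]
    have hb := b_pos hv
    have := (integrable_sq_mul_exp_neg_sq hb).const_mul (√(2 * π * v))⁻¹
    refine this.congr (Eventually.of_forall fun x => ?_)
    simp only [gaussianPDFReal_centered]
    ring

lemma integral_sq_gaussianReal0 : ∫ x, x ^ 2 ∂(gaussianReal 0 v) = v := by
  by_cases hv : v = 0
  · rw [hv, gaussianReal_zero_var, integral_dirac]; simp [hv]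
  · rw [gaussianReal_integral_eq 0 hv]
    have hb := b_pos hv
    have hvpos : (0:ℝ) < v := lt_of_le_of_ne v.coe_nonneg (by exact_mod_cast (Ne.symm hv))
    calc ∫ x, gaussianPDFReal 0 v x * x ^ 2
        = ∫ x, (√(2 * π * v))⁻¹ * (x ^ 2 * rexp (-(2 * (v:ℝ))⁻¹ * x ^ 2)) := by
          congr 1; funext x; rw [gaussianPDFReal_centered]; ring
      _ = (√(2 * π * v))⁻¹ * ∫ x, x ^ 2 * rexp (-(2 * (v:ℝ))⁻¹ * x ^ 2) := MeasureTheory.integral_const_mul _ _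
      _ = (√(2 * π * v))⁻¹ * ((2 * (2 * (v:ℝ))⁻¹)⁻¹ * √(π / (2 * (v:ℝ))⁻¹)) := by
          rw [integral_sq_mul_exp_neg_sq hb]
      _ = (v:ℝ) := by
          have h2 : π / (2 * (v:ℝ))⁻¹ = 2 * π * v := by field_simp
          have h3 : (2 * (2 * (v:ℝ))⁻¹)⁻¹ = v := by field_simp
          rw [h2, h3]
          have h4 : (0:ℝ) < 2 * π * v := by positivity
          rw [inv_mul_eq_div]
          rw [mul_div_assoc, div_self (by positivity : √(2*π*(v:ℝ)) ≠ 0), mul_one]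

end moments

section BM
variable {Ω : Type*} [MeasurableSpace Ω] {P : Measure Ω} [IsProbabilityMeasure P]
  {T : ℝ} {B : ℝ → Ω → ℝ} (hB : IsStdBrownianMotion P B T)
include hB

lemma BM.law1 {s : ℝ} (hs : s ∈ Set.Icc (0:ℝ) T) :
    P.map (B s) = gaussianReal 0 (Real.toNNReal s) := by
  have h := hB.2.2.2 1 (fun _ => s) (fun _ => hs) (fun _ => 1)
  have h1 : (fun ω => ∑ i : Fin 1, 1 * B s ω) = B s := by
    funext ω; simp
  have h2 : (∑ i : Fin 1, ∑ j : Fin 1, (1:ℝ) * 1 * min s s) = s := by simp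
  rwa [h1, h2] at h

lemma BM.law2 {s u : ℝ} (hs : s ∈ Set.Icc (0:ℝ) T) (hu : u ∈ Set.Icc (0:ℝ) T) :
    P.map (fun ω => B s ω + B u ω)
      = gaussianReal 0 (Real.toNNReal (s + u + 2 * min s u)) := by
  have h := hB.2.2.2 2 ![s, u] (fun i => by fin_cases i <;> simpa) ![1, 1]
  have h1 : (fun ω => ∑ i : Fin 2, ![(1:ℝ), 1] i * B (![s, u] i) ω)
      = fun ω => B s ω + B u ω := by
    funext ω; simp [Fin.sum_univ_two]
  have h2 : (∑ i : Fin 2, ∑ j : Fin 2, ![(1:ℝ),1] i * ![(1:ℝ),1] j * min (![s,u] i) (![s,u] j))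
      = s + u + 2 * min s u := by
    simp [Fin.sum_univ_two, min_comm u s]
    ring
  rwa [h1, h2] at h

lemma BM.integrable {s : ℝ} (hs : s ∈ Set.Icc (0:ℝ) T) : Integrable (B s) P := by
  have hm := hB.1 s hs
  have h0 : Integrable (fun x : ℝ => x) (P.map (B s)) := by
    rw [BM.law1 hB hs]; exact integrable_id_gaussianReal _
  exact (integrable_map_measure aestronglyMeasurable_id hm.aemeasurable).mp h0

lemma BM.mean {s : ℝ} (hs : s ∈ Set.Icc (0:ℝ) T) : ∫ ω, B s ω ∂P = 0 := by
  have hm := hB.1 s hs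
  have h : ∫ x, x ∂(P.map (B s)) = ∫ ω, B s ω ∂P :=
    integral_map hm.aemeasurable aestronglyMeasurable_id
  rw [BM.law1 hB hs, integral_id_gaussianReal0] at h
  exact h.symm

lemma BM.integrable_sq {s : ℝ} (hs : s ∈ Set.Icc (0:ℝ) T) :
    Integrable (fun ω => B s ω ^ 2) P := by
  have hm := hB.1 s hs
  have h0 : Integrable (fun x : ℝ => x ^ 2) (P.map (B s)) := by
    rw [BM.law1 hB hs]; exact integrable_sq_gaussianReal _
  exact (integrable_map_measure (measurable_id.pow_const 2).aestronglyMeasurable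
    hm.aemeasurable).mp h0

lemma BM.mean_sq {s : ℝ} (hs : s ∈ Set.Icc (0:ℝ) T) : ∫ ω, B s ω ^ 2 ∂P = s := by
  have hm := hB.1 s hs
  have h : ∫ x, x ^ 2 ∂(P.map (B s)) = ∫ ω, B s ω ^ 2 ∂P :=
    integral_map hm.aemeasurable (measurable_id.pow_const 2).aestronglyMeasurable
  rw [BM.law1 hB hs, integral_sq_gaussianReal0] at h
  rw [← h, Real.coe_toNNReal _ hs.1]

lemma BM.integrable_mul {s u : ℝ} (hs : s ∈ Set.Icc (0:ℝ) T) (hu : u ∈ Set.Icc (0:ℝ) T) :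
    Integrable (fun ω => B s ω * B u ω) P := by
  have hbound : Integrable (fun ω => (B s ω ^ 2 + B u ω ^ 2) / 2) P :=
    ((BM.integrable_sq hB hs).add (BM.integrable_sq hB hu)).div_const 2
  refine hbound.mono' ((hB.1 s hs).mul (hB.1 u hu)).aestronglyMeasurable ?_
  refine Filter.Eventually.of_forall fun ω => ?_
  rw [Real.norm_eq_abs, abs_mul]
  nlinarith [sq_nonneg (|B s ω| - |B u ω|), sq_abs (B s ω), sq_abs (B u ω)]

lemma BM.cov {s u : ℝ} (hs : s ∈ Set.Icc (0:ℝ) T) (hu : u ∈ Set.Icc (0:ℝ) T) :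
    ∫ ω, B s ω * B u ω ∂P = min s u := by
  have hm : Measurable (fun ω => B s ω + B u ω) := (hB.1 s hs).add (hB.1 u hu)
  have h : ∫ x, x ^ 2 ∂(P.map (fun ω => B s ω + B u ω)) = ∫ ω, (B s ω + B u ω) ^ 2 ∂P :=
    integral_map hm.aemeasurable (measurable_id.pow_const 2).aestronglyMeasurable
  rw [BM.law2 hB hs hu, integral_sq_gaussianReal0] at h
  have hnn : (0:ℝ) ≤ s + u + 2 * min s u := by
    have h1 := hs.1; have h2 := hu.1
    have : (0:ℝ) ≤ min s u := le_min h1 h2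
    linarith
  rw [Real.coe_toNNReal _ hnn] at h
  have hexp : ∫ ω, (B s ω + B u ω) ^ 2 ∂P
      = (∫ ω, B s ω ^ 2 ∂P) + 2 * (∫ ω, B s ω * B u ω ∂P) + ∫ ω, B u ω ^ 2 ∂P := by
    have e1 : (fun ω => (B s ω + B u ω) ^ 2)
        = fun ω => B s ω ^ 2 + (2 * (B s ω * B u ω) + B u ω ^ 2) := by
      funext ω; ring
    have i0 : Integrable (fun ω => 2 * (B s ω * B u ω)) P :=
      (BM.integrable_mul hB hs hu).const_mul 2
    have i1 : Integrable (fun ω => 2 * (B s ω * B u ω) + B u ω ^ 2) P :=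
      i0.add (BM.integrable_sq hB hu)
    rw [e1, integral_add (BM.integrable_sq hB hs) i1, integral_add i0 (BM.integrable_sq hB hu),
      MeasureTheory.integral_const_mul]
    ring
  rw [BM.mean_sq hB hs, BM.mean_sq hB hu] at hexp
  rw [hexp] at h
  linarith

end BM

section Core
variable {Ω : Type*} [MeasurableSpace Ω] {P : Measure Ω} [IsProbabilityMeasure P]
  {T : ℝ} {C : ℝ → Ω → ℝ}

noncomputable def clmp (T s : ℝ) : ℝ := max 0 (min s T)

lemma clmp_mem (hT : 0 ≤ T) (s : ℝ) : clmp T s ∈ Icc (0:ℝ) T :=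
  ⟨le_max_left _ _, max_le hT (min_le_right s T)⟩

lemma clmp_of_mem {s : ℝ} (hs : s ∈ Icc (0:ℝ) T) : clmp T s = s := by
  rw [clmp, min_eq_left hs.2, max_eq_right hs.1]

lemma continuous_clmp : Continuous (clmp T) :=
  continuous_const.max (continuous_id.min continuous_const)

instance resFin (a b : ℝ) : IsFiniteMeasure ((volume : Measure ℝ).restrict (Set.Ioc a b)) :=
  ⟨by rw [Measure.restrict_apply_univ]; exact measure_Ioc_lt_top⟩

variable (hT : 0 ≤ T)
  (hmeas : Measurable (Function.uncurry C))
  (hInt : ∀ s, Integrable (C s) P)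
  (hIntMul : ∀ s u, Integrable (fun ω => C s ω * C u ω) P)
  (hMean : ∀ s, ∫ ω, C s ω ∂P = 0)
  (hCov : ∀ s u, ∫ ω, C s ω * C u ω ∂P = min (clmp T s) (clmp T u))

section integrab
include hT hmeas hInt hIntMul hMean hCov

lemma core_bound1 (s u : ℝ) : ∫ ω, ‖C s ω * C u ω‖ ∂P ≤ T := by
  have hmono : ∫ ω, ‖C s ω * C u ω‖ ∂P
      ≤ ∫ ω, (C s ω * C s ω + C u ω * C u ω) / 2 ∂P := by
    refine integral_mono (hIntMul s u).norm
      (((hIntMul s s).add (hIntMul u u)).div_const 2) fun ω => ?_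
    simp only [norm_mul, Real.norm_eq_abs, Pi.add_apply]
    nlinarith [sq_nonneg (|C s ω| - |C u ω|), sq_abs (C s ω), sq_abs (C u ω),
      abs_mul_abs_self (C s ω), abs_mul_abs_self (C u ω)]
  have heval : ∫ ω, (C s ω * C s ω + C u ω * C u ω) / 2 ∂P
      = (min (clmp T s) (clmp T s) + min (clmp T u) (clmp T u)) / 2 := by
    rw [MeasureTheory.integral_div, integral_add (hIntMul s s) (hIntMul u u), hCov, hCov]
  rw [heval] at hmono
  simp only [min_self] at hmono
  have h1 := (clmp_mem hT s).2
  have h2 := (clmp_mem hT u).2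
  linarith

lemma core_bound0 (s : ℝ) (hIl : Integrable (C s) P) :
    ∫ ω, ‖C s ω‖ ∂P ≤ (1 + T) / 2 := by
  have hmono : ∫ ω, ‖C s ω‖ ∂P ≤ ∫ ω, (1 + C s ω * C s ω) / 2 ∂P := by
    refine integral_mono hIl.norm
      (((integrable_const 1).add (hIntMul s s)).div_const 2) fun ω => ?_
    simp only [Real.norm_eq_abs, Pi.add_apply, Pi.one_apply]
    nlinarith [sq_nonneg (|C s ω| - 1), abs_mul_abs_self (C s ω)]
  have heval : ∫ ω, (1 + C s ω * C s ω) / 2 ∂P = (1 + min (clmp T s) (clmp T s)) / 2 := by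
    rw [MeasureTheory.integral_div, integral_add (integrable_const 1) (hIntMul s s), hCov]
    simp
  rw [heval, min_self] at hmono
  have h2 := (clmp_mem hT s).2
  linarith

lemma core_int0 (a b : ℝ) :
    Integrable (fun q : ℝ × Ω => C q.1 q.2) (((volume : Measure ℝ).restrict (Ioc a b)).prod P) := by
  have hms : AEStronglyMeasurable (fun q : ℝ × Ω => C q.1 q.2)
      (((volume : Measure ℝ).restrict (Ioc a b)).prod P) := hmeas.aestronglyMeasurable
  rw [integrable_prod_iff hms]
  refine ⟨Filter.Eventually.of_forall fun s => hInt s, ?_⟩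
  refine ⟨hms.norm.integral_prod_right', ?_⟩
  refine HasFiniteIntegral.of_bounded (C := (1 + T) / 2) (Filter.Eventually.of_forall fun s => ?_)
  rw [Real.norm_eq_abs, abs_of_nonneg (integral_nonneg fun ω => norm_nonneg _)]
  exact core_bound0 hT hmeas hInt hIntMul hMean hCov s (hInt s)

lemma core_int1 (a b u : ℝ) :
    Integrable (fun q : ℝ × Ω => C q.1 q.2 * C u q.2)
      (((volume : Measure ℝ).restrict (Ioc a b)).prod P) := by
  have hms : AEStronglyMeasurable (fun q : ℝ × Ω => C q.1 q.2 * C u q.2)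
      (((volume : Measure ℝ).restrict (Ioc a b)).prod P) := by
    have h1 : Measurable fun q : ℝ × Ω => C q.1 q.2 := hmeas
    have h2 : Measurable fun q : ℝ × Ω => C u q.2 :=
      (hmeas.comp (measurable_const.prodMk measurable_snd) : )
    exact (h1.mul h2).aestronglyMeasurable
  rw [integrable_prod_iff hms]
  refine ⟨Filter.Eventually.of_forall fun s => hIntMul s u, ?_⟩
  refine ⟨hms.norm.integral_prod_right', ?_⟩
  refine HasFiniteIntegral.of_bounded (C := T) (Filter.Eventually.of_forall fun s => ?_)
  rw [Real.norm_eq_abs, abs_of_nonneg (integral_nonneg fun ω => norm_nonneg _)]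
  exact core_bound1 hT hmeas hInt hIntMul hMean hCov s u

lemma core_int2 (a b c d : ℝ) :
    Integrable (fun r : (ℝ × ℝ) × Ω => C r.1.1 r.2 * C r.1.2 r.2)
      ((((volume : Measure ℝ).restrict (Ioc a b)).prod
        ((volume : Measure ℝ).restrict (Ioc c d))).prod P) := by
  have hms : AEStronglyMeasurable (fun r : (ℝ × ℝ) × Ω => C r.1.1 r.2 * C r.1.2 r.2)
      ((((volume : Measure ℝ).restrict (Ioc a b)).prod
        ((volume : Measure ℝ).restrict (Ioc c d))).prod P) := by
    have h1 : Measurable fun r : (ℝ × ℝ) × Ω => C r.1.1 r.2 :=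
      (hmeas.comp ((measurable_fst.fst).prodMk measurable_snd) : )
    have h2 : Measurable fun r : (ℝ × ℝ) × Ω => C r.1.2 r.2 :=
      (hmeas.comp ((measurable_fst.snd).prodMk measurable_snd) : )
    exact (h1.mul h2).aestronglyMeasurable
  rw [integrable_prod_iff hms]
  refine ⟨Filter.Eventually.of_forall fun r => hIntMul r.1 r.2, ?_⟩
  refine ⟨hms.norm.integral_prod_right', ?_⟩
  refine HasFiniteIntegral.of_bounded (C := T) (Filter.Eventually.of_forall fun r => ?_)
  rw [Real.norm_eq_abs, abs_of_nonneg (integral_nonneg fun ω => norm_nonneg _)]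
  exact core_bound1 hT hmeas hInt hIntMul hMean hCov r.1 r.2

end integrab
section swaps
include hT hmeas hInt hIntMul hMean hCov

lemma core_swap0 (a b : ℝ) : ∫ ω, (∫ s in Ioc a b, C s ω) ∂P = 0 := by
  have h := integral_integral_swap (f := fun s ω => C s ω)
    (core_int0 hT hmeas hInt hIntMul hMean hCov a b)
  rw [← h]
  simp [hMean]

lemma core_swap1 (a b u : ℝ) :
    ∫ ω, (∫ s in Ioc a b, C s ω) * C u ω ∂P
      = ∫ s in Ioc a b, min (clmp T s) (clmp T u) := by
  have h := integral_integral_swap (f := fun s ω => C s ω * C u ω)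
    (core_int1 hT hmeas hInt hIntMul hMean hCov a b u)
  have h2 : ∀ ω, ∫ s in Ioc a b, C s ω * C u ω = (∫ s in Ioc a b, C s ω) * C u ω :=
    fun ω => MeasureTheory.integral_mul_const _ _
  simp_rw [h2] at h
  rw [← h]
  simp_rw [hCov]

lemma core_swap2 (a b c d : ℝ) :
    ∫ ω, (∫ s in Ioc a b, C s ω) * (∫ u in Ioc c d, C u ω) ∂P
      = ∫ s in Ioc a b, ∫ u in Ioc c d, min (clmp T s) (clmp T u) := by
  have h := integral_integral_swap (f := fun (r : ℝ × ℝ) ω => C r.1 ω * C r.2 ω)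
    (core_int2 hT hmeas hInt hIntMul hMean hCov a b c d)
  have h2 : ∀ ω, (∫ r, C r.1 ω * C r.2 ω
        ∂(((volume : Measure ℝ).restrict (Ioc a b)).prod
          ((volume : Measure ℝ).restrict (Ioc c d))))
      = (∫ s in Ioc a b, C s ω) * (∫ u in Ioc c d, C u ω) :=
    fun ω => integral_prod_mul (f := fun s => C s ω) (g := fun u => C u ω)
  simp_rw [h2] at h
  rw [← h]
  simp_rw [hCov]
  refine integral_prod _ ?_
  refine ⟨((continuous_clmp.comp continuous_fst).min
    (continuous_clmp.comp continuous_snd)).aestronglyMeasurable, ?_⟩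
  refine HasFiniteIntegral.of_bounded (C := T) (Filter.Eventually.of_forall fun r => ?_)
  rw [Real.norm_eq_abs, abs_of_nonneg (le_min (clmp_mem hT r.1).1 (clmp_mem hT r.2).1)]
  exact min_le_of_left_le (clmp_mem hT r.1).2

lemma core_intA (a b : ℝ) : Integrable (fun ω => ∫ s in Ioc a b, C s ω) P :=
  (core_int0 hT hmeas hInt hIntMul hMean hCov a b).integral_prod_right

lemma core_intAZ (a b u : ℝ) :
    Integrable (fun ω => (∫ s in Ioc a b, C s ω) * C u ω) P := by
  have h := (core_int1 hT hmeas hInt hIntMul hMean hCov a b u).integral_prod_right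
  exact h.congr (Filter.Eventually.of_forall fun ω => MeasureTheory.integral_mul_const (C u ω) (fun s => C s ω))

lemma core_intAA (a b c d : ℝ) :
    Integrable (fun ω => (∫ s in Ioc a b, C s ω) * (∫ u in Ioc c d, C u ω)) P := by
  have h := (core_int2 hT hmeas hInt hIntMul hMean hCov a b c d).integral_prod_right
  exact h.congr (Filter.Eventually.of_forall fun ω => integral_prod_mul (f := fun s => C s ω) (g := fun u => C u ω))

end swaps

section cov
include hT hmeas hInt hIntMul hMean hCov

lemma core_cov (a b c d : ℝ) :
    ∫ ω, ((∫ s in Ioc a b, C s ω) - 1/2 * (C b ω + C a ω) * (b - a))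
        * ((∫ u in Ioc c d, C u ω) - 1/2 * (C d ω + C c ω) * (d - c)) ∂P
      = (∫ s in Ioc a b, ∫ u in Ioc c d, min (clmp T s) (clmp T u))
        - 1/2 * (d - c) * ((∫ s in Ioc a b, min (clmp T s) (clmp T d))
            + ∫ s in Ioc a b, min (clmp T s) (clmp T c))
        - 1/2 * (b - a) * ((∫ u in Ioc c d, min (clmp T u) (clmp T b))
            + ∫ u in Ioc c d, min (clmp T u) (clmp T a))
        + 1/4 * (b - a) * (d - c) * (min (clmp T b) (clmp T d) + min (clmp T b) (clmp T c)
            + min (clmp T a) (clmp T d) + min (clmp T a) (clmp T c)) := by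
  have i1 := core_intAA hT hmeas hInt hIntMul hMean hCov a b c d
  have i2 : Integrable (fun ω => 1/2 * (d - c) * ((∫ s in Ioc a b, C s ω) * C d ω
      + (∫ s in Ioc a b, C s ω) * C c ω)) P :=
    ((core_intAZ hT hmeas hInt hIntMul hMean hCov a b d).add
      (core_intAZ hT hmeas hInt hIntMul hMean hCov a b c)).const_mul _
  have i3 : Integrable (fun ω => 1/2 * (b - a) * ((∫ u in Ioc c d, C u ω) * C b ω
      + (∫ u in Ioc c d, C u ω) * C a ω)) P :=
    ((core_intAZ hT hmeas hInt hIntMul hMean hCov c d b).add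
      (core_intAZ hT hmeas hInt hIntMul hMean hCov c d a)).const_mul _
  have i4 : Integrable (fun ω => 1/4 * (b - a) * (d - c) * (C b ω * C d ω + C b ω * C c ω
      + C a ω * C d ω + C a ω * C c ω)) P :=
    ((((hIntMul b d).add (hIntMul b c)).add (hIntMul a d)).add (hIntMul a c)).const_mul _
  have e : (fun ω => ((∫ s in Ioc a b, C s ω) - 1/2 * (C b ω + C a ω) * (b - a))
        * ((∫ u in Ioc c d, C u ω) - 1/2 * (C d ω + C c ω) * (d - c)))
      = fun ω => (∫ s in Ioc a b, C s ω) * (∫ u in Ioc c d, C u ω)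
        - 1/2 * (d - c) * ((∫ s in Ioc a b, C s ω) * C d ω + (∫ s in Ioc a b, C s ω) * C c ω)
        - 1/2 * (b - a) * ((∫ u in Ioc c d, C u ω) * C b ω + (∫ u in Ioc c d, C u ω) * C a ω)
        + 1/4 * (b - a) * (d - c) * (C b ω * C d ω + C b ω * C c ω
            + C a ω * C d ω + C a ω * C c ω) := by
    funext ω; ring
  have i12 : Integrable (fun ω => (∫ s in Ioc a b, C s ω) * (∫ u in Ioc c d, C u ω)
      - 1/2 * (d - c) * ((∫ s in Ioc a b, C s ω) * C d ω
        + (∫ s in Ioc a b, C s ω) * C c ω)) P := i1.sub i2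
  have i123 : Integrable (fun ω => (∫ s in Ioc a b, C s ω) * (∫ u in Ioc c d, C u ω)
      - 1/2 * (d - c) * ((∫ s in Ioc a b, C s ω) * C d ω + (∫ s in Ioc a b, C s ω) * C c ω)
      - 1/2 * (b - a) * ((∫ u in Ioc c d, C u ω) * C b ω
        + (∫ u in Ioc c d, C u ω) * C a ω)) P := i12.sub i3
  rw [e, integral_add i123 i4, integral_sub i12 i3, integral_sub i1 i2]
  rw [MeasureTheory.integral_const_mul, MeasureTheory.integral_const_mul, MeasureTheory.integral_const_mul]
  rw [integral_add (core_intAZ hT hmeas hInt hIntMul hMean hCov a b d)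
      (core_intAZ hT hmeas hInt hIntMul hMean hCov a b c),
    integral_add (core_intAZ hT hmeas hInt hIntMul hMean hCov c d b)
      (core_intAZ hT hmeas hInt hIntMul hMean hCov c d a),
    show (∫ ω, (C b ω * C d ω + C b ω * C c ω + C a ω * C d ω + C a ω * C c ω) ∂P) = _ from
      integral_add (show Integrable (fun ω => C b ω * C d ω + C b ω * C c ω + C a ω * C d ω) P from
        (show Integrable (fun ω => C b ω * C d ω + C b ω * C c ω) P from
          (hIntMul b d).add (hIntMul b c)).add (hIntMul a d)) (hIntMul a c),
    integral_add (show Integrable (fun ω => C b ω * C d ω + C b ω * C c ω) P from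
      (hIntMul b d).add (hIntMul b c)) (hIntMul a d),
    integral_add (hIntMul b d) (hIntMul b c)]
  rw [core_swap2 hT hmeas hInt hIntMul hMean hCov a b c d,
    core_swap1 hT hmeas hInt hIntMul hMean hCov a b d,
    core_swap1 hT hmeas hInt hIntMul hMean hCov a b c,
    core_swap1 hT hmeas hInt hIntMul hMean hCov c d b,
    core_swap1 hT hmeas hInt hIntMul hMean hCov c d a,
    hCov b d, hCov b c, hCov a d, hCov a c]

lemma core_cov_clean {a b c d : ℝ} (ha : a ∈ Icc (0:ℝ) T) (hb : b ∈ Icc (0:ℝ) T)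
    (hc : c ∈ Icc (0:ℝ) T) (hd : d ∈ Icc (0:ℝ) T) (hab : a ≤ b) (hcd : c ≤ d) :
    ∫ ω, ((∫ s in Ioc a b, C s ω) - 1/2 * (C b ω + C a ω) * (b - a))
        * ((∫ u in Ioc c d, C u ω) - 1/2 * (C d ω + C c ω) * (d - c)) ∂P
      = (∫ s in a..b, ∫ u in c..d, min s u)
        - 1/2 * (d - c) * ((∫ s in a..b, min s d) + ∫ s in a..b, min s c)
        - 1/2 * (b - a) * ((∫ u in c..d, min u b) + ∫ u in c..d, min u a)
        + 1/4 * (b - a) * (d - c) * (min b d + min b c + min a d + min a c) := by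
  have hmem : ∀ {x y : ℝ}, x ∈ Icc (0:ℝ) T → y ∈ Icc (0:ℝ) T → ∀ s ∈ Ioc x y, s ∈ Icc (0:ℝ) T :=
    fun hx hy s hs => ⟨le_trans hx.1 hs.1.le, le_trans hs.2 hy.2⟩
  rw [core_cov hT hmeas hInt hIntMul hMean hCov a b c d]
  rw [clmp_of_mem ha, clmp_of_mem hb, clmp_of_mem hc, clmp_of_mem hd]
  have e1 : (∫ s in Ioc a b, ∫ u in Ioc c d, min (clmp T s) (clmp T u))
      = ∫ s in a..b, ∫ u in c..d, min s u := by
    rw [intervalIntegral.integral_of_le hab]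
    refine setIntegral_congr_fun measurableSet_Ioc fun s hs => ?_
    rw [intervalIntegral.integral_of_le hcd]
    refine setIntegral_congr_fun measurableSet_Ioc fun u hu => ?_
    rw [clmp_of_mem (hmem ha hb s hs), clmp_of_mem (hmem hc hd u hu)]
  have e2 : ∀ {x y : ℝ} (v : ℝ), x ∈ Icc (0:ℝ) T → y ∈ Icc (0:ℝ) T → x ≤ y →
      (∫ s in Ioc x y, min (clmp T s) v) = ∫ s in x..y, min s v := by
    intro x y v hx hy hxy
    rw [intervalIntegral.integral_of_le hxy]
    refine setIntegral_congr_fun measurableSet_Ioc fun s hs => ?_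
    rw [clmp_of_mem (hmem hx hy s hs)]
  rw [e1, e2 d ha hb hab, e2 c ha hb hab, e2 b hc hd hcd, e2 a hc hd hcd]

lemma core_intYY (a b c d : ℝ) :
    Integrable (fun ω => ((∫ s in Ioc a b, C s ω) - 1/2 * (C b ω + C a ω) * (b - a))
      * ((∫ u in Ioc c d, C u ω) - 1/2 * (C d ω + C c ω) * (d - c))) P := by
  have i1 := core_intAA hT hmeas hInt hIntMul hMean hCov a b c d
  have i2 : Integrable (fun ω => 1/2 * (d - c) * ((∫ s in Ioc a b, C s ω) * C d ω
      + (∫ s in Ioc a b, C s ω) * C c ω)) P :=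
    ((core_intAZ hT hmeas hInt hIntMul hMean hCov a b d).add
      (core_intAZ hT hmeas hInt hIntMul hMean hCov a b c)).const_mul _
  have i3 : Integrable (fun ω => 1/2 * (b - a) * ((∫ u in Ioc c d, C u ω) * C b ω
      + (∫ u in Ioc c d, C u ω) * C a ω)) P :=
    ((core_intAZ hT hmeas hInt hIntMul hMean hCov c d b).add
      (core_intAZ hT hmeas hInt hIntMul hMean hCov c d a)).const_mul _
  have i4 : Integrable (fun ω => 1/4 * (b - a) * (d - c) * (C b ω * C d ω + C b ω * C c ω
      + C a ω * C d ω + C a ω * C c ω)) P :=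
    ((((hIntMul b d).add (hIntMul b c)).add (hIntMul a d)).add (hIntMul a c)).const_mul _
  refine (((i1.sub i2).sub i3).add i4).congr (Filter.Eventually.of_forall fun ω => ?_)
  simp only [Pi.add_apply, Pi.sub_apply]
  ring

end cov
end Core


lemma intInt_min (u : ℝ) : IntervalIntegrable (fun s : ℝ => min s u) volume a b :=
  (continuous_id.min continuous_const).intervalIntegrable _ _

lemma h_min_right {a b u : ℝ} (hab : a ≤ b) (hbu : b ≤ u) :
    ∫ s in a..b, min s u = (b ^ 2 - a ^ 2) / 2 := by
  rw [intervalIntegral.integral_congr (g := fun s => s) ?_, integral_id]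
  intro s hs
  rw [uIcc_of_le hab] at hs
  exact min_eq_left (hs.2.trans hbu)

lemma h_min_const {c d v : ℝ} (hcd : c ≤ d) (hvc : v ≤ c) :
    ∫ u in c..d, min u v = (d - c) * v := by
  rw [intervalIntegral.integral_congr (g := fun _ => v) ?_, intervalIntegral.integral_const, smul_eq_mul]
  intro u hu
  rw [uIcc_of_le hcd] at hu
  exact min_eq_right (hvc.trans hu.1)

lemma h_min_inner {a b u : ℝ} (hu : u ∈ Icc a b) :
    ∫ s in a..b, min s u = (u ^ 2 - a ^ 2) / 2 + u * (b - u) := by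
  rw [← integral_add_adjacent_intervals (b := u) (intInt_min u) (intInt_min u)]
  have h1 : ∫ s in a..u, min s u = (u ^ 2 - a ^ 2) / 2 := by
    rw [intervalIntegral.integral_congr (g := fun s => s) ?_, integral_id]
    intro s hs
    rw [uIcc_of_le hu.1] at hs
    exact min_eq_left hs.2
  have h2 : ∫ s in u..b, min s u = u * (b - u) := by
    rw [intervalIntegral.integral_congr (g := fun _ => u) ?_, intervalIntegral.integral_const, smul_eq_mul]
    · ring
    intro s hs
    rw [uIcc_of_le hu.2] at hs
    exact min_eq_right hs.1
  rw [h1, h2]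

lemma h_poly {a b : ℝ} :
    ∫ u in a..b, (-(1/2) * u ^ 2 + (b * u - a ^ 2 / 2))
      = -(1/2) * ((b ^ 3 - a ^ 3) / 3) + (b * ((b ^ 2 - a ^ 2) / 2) - (b - a) * (a ^ 2 / 2)) := by
  have i1 : IntervalIntegrable (fun u : ℝ => -(1/2) * u ^ 2) volume a b := by
    apply Continuous.intervalIntegrable; continuity
  have i2 : IntervalIntegrable (fun u : ℝ => b * u - a ^ 2 / 2) volume a b := by
    apply Continuous.intervalIntegrable; continuity
  have i3 : IntervalIntegrable (fun u : ℝ => b * u) volume a b := by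
    apply Continuous.intervalIntegrable; continuity
  have i4 : IntervalIntegrable (fun u : ℝ => (a ^ 2 / 2 : ℝ)) volume a b :=
    intervalIntegrable_const
  rw [integral_add i1 i2, integral_sub i3 i4, intervalIntegral.integral_const_mul, intervalIntegral.integral_const_mul,
    intervalIntegral.integral_const, integral_pow, integral_id, smul_eq_mul]
  norm_num

lemma h_double {a b : ℝ} (hab : a ≤ b) :
    ∫ u in a..b, (∫ s in a..b, min s u)
      = -(1/2) * ((b ^ 3 - a ^ 3) / 3) + (b * ((b ^ 2 - a ^ 2) / 2) - (b - a) * (a ^ 2 / 2)) := by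
  rw [intervalIntegral.integral_congr (g := fun u => -(1/2) * u ^ 2 + (b * u - a ^ 2 / 2)) ?_,
    h_poly]
  intro u hu
  rw [uIcc_of_le hab] at hu
  simp only
  rw [h_min_inner hu]
  ring

lemma calc_off {a b c d : ℝ} (hab : a ≤ b) (hbc : b ≤ c) (hcd : c ≤ d) :
    (∫ s in a..b, ∫ u in c..d, min s u)
        - 1/2 * (d - c) * ((∫ s in a..b, min s d) + ∫ s in a..b, min s c)
        - 1/2 * (b - a) * ((∫ u in c..d, min u b) + ∫ u in c..d, min u a)
        + 1/4 * (b - a) * (d - c) * (min b d + min b c + min a d + min a c) = 0 := by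
  have hac : a ≤ c := hab.trans hbc
  have hbd : b ≤ d := hbc.trans hcd
  have e1 : (∫ s in a..b, ∫ u in c..d, min s u) = (d - c) * ((b ^ 2 - a ^ 2) / 2) := by
    rw [intervalIntegral.integral_congr (g := fun s => (d - c) * s) ?_]
    · rw [intervalIntegral.integral_const_mul, integral_id]
    intro s hs
    rw [uIcc_of_le hab] at hs
    simp only
    rw [intervalIntegral.integral_congr (g := fun _ => s) ?_, intervalIntegral.integral_const, smul_eq_mul]
    intro u hu
    rw [uIcc_of_le hcd] at hu
    exact min_eq_left ((hs.2.trans hbc).trans hu.1)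
  rw [e1, h_min_right hab hbd, h_min_right hab hbc, h_min_const hcd hbc, h_min_const hcd hac,
    min_eq_left hbd, min_eq_left hbc, min_eq_left (hac.trans hcd), min_eq_left hac]
  ring

lemma calc_diag {a b : ℝ} (hab : a ≤ b) :
    (∫ s in a..b, ∫ u in a..b, min s u)
        - 1/2 * (b - a) * ((∫ s in a..b, min s b) + ∫ s in a..b, min s a)
        - 1/2 * (b - a) * ((∫ u in a..b, min u b) + ∫ u in a..b, min u a)
        + 1/4 * (b - a) * (b - a) * (min b b + min b a + min a b + min a a)
      = (b - a) ^ 3 / 12 := by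
  have e1 : (∫ s in a..b, ∫ u in a..b, min s u)
      = -(1/2) * ((b ^ 3 - a ^ 3) / 3) + (b * ((b ^ 2 - a ^ 2) / 2) - (b - a) * (a ^ 2 / 2)) := by
    rw [← h_double hab]
    refine intervalIntegral.integral_congr fun s hs => ?_
    exact intervalIntegral.integral_congr fun u hu => min_comm s u
  rw [e1, h_min_right hab le_rfl, h_min_const hab le_rfl, min_self, min_self,
    min_eq_right hab, min_eq_left hab]
  ring

end BMaux

/-- The trapezoidal-rule estimator of `∫_0^T B_t dt` from the node data
`(t j, B (t j))` has mean zero, and its mean squared error equals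
`(1/12) ∑_j (t (j+1) - t j)^3`. -/
theorem trapezoid_brownian_mean_zero_and_mse
    {Ω : Type*} [MeasurableSpace Ω] (P : Measure Ω) [IsProbabilityMeasure P]
    (T : ℝ) (B : ℝ → Ω → ℝ) (hB : IsStdBrownianMotion P B T)
    (J : ℕ) (hJ : 2 ≤ J) (t : ℕ → ℝ)
    (ht0 : t 0 = 0) (htJ : t (J - 1) = T)
    (hmono : ∀ j, j + 1 ≤ J - 1 → t j < t (j + 1)) :
    (∫ ω, ((∫ s in (0 : ℝ)..T, B s ω) - trapezoid J t fun j => B (t j) ω) ∂P) = 0 ∧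
    (∫ ω, ((∫ s in (0 : ℝ)..T, B s ω) - trapezoid J t fun j => B (t j) ω) ^ 2 ∂P)
      = (1 / 12) * ∑ j ∈ Finset.range (J - 1), (t (j + 1) - t j) ^ 3 := by
  obtain ⟨hBmeas, hBcont, -, -⟩ := id hB
  have htle : ∀ i j : ℕ, i ≤ j → j ≤ J - 1 → t i ≤ t j := by
    intro i j hij hj
    induction j with
    | zero => simp [Nat.le_zero.mp hij]
    | succ m ih =>
      rcases Nat.lt_or_ge i (m+1) with h | h
      · have h1 : t i ≤ t m := ih (by omega) (by omega)
        exact h1.trans (hmono m hj).le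
      · have hi : i = m + 1 := by omega
        simp [hi]
  have hT : 0 ≤ T := by
    rw [← ht0, ← htJ]; exact htle 0 (J-1) (Nat.zero_le _) le_rfl
  have hnode : ∀ j, j ≤ J - 1 → t j ∈ Set.Icc (0:ℝ) T := fun j hj =>
    ⟨ht0 ▸ htle 0 j (Nat.zero_le _) hj, htJ ▸ htle j (J-1) hj le_rfl⟩
  set C : ℝ → Ω → ℝ := fun s ω => B (clmp T s) ω with hCdef
  have hcontC : ∀ ω, Continuous (fun s => C s ω) := fun ω =>
    ContinuousOn.comp_continuous (hBcont ω) continuous_clmp (clmp_mem hT)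
  have hmeasC : Measurable (Function.uncurry C) :=
    measurable_uncurry_of_continuous_of_measurable hcontC (fun s => hBmeas _ (clmp_mem hT s))
  have hIntC : ∀ s, Integrable (C s) P := fun s => BM.integrable hB (clmp_mem hT s)
  have hIntMulC : ∀ s u, Integrable (fun ω => C s ω * C u ω) P := fun s u =>
    BM.integrable_mul hB (clmp_mem hT s) (clmp_mem hT u)
  have hMeanC : ∀ s, ∫ ω, C s ω ∂P = 0 := fun s => BM.mean hB (clmp_mem hT s)
  have hCovC : ∀ s u, ∫ ω, C s ω * C u ω ∂P = min (clmp T s) (clmp T u) := fun s u =>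
    BM.cov hB (clmp_mem hT s) (clmp_mem hT u)
  have hCnode : ∀ j, j ≤ J - 1 → ∀ ω, C (t j) ω = B (t j) ω := by
    intro j hj ω
    simp only [hCdef]
    rw [clmp_of_mem (hnode j hj)]
  set Y : ℕ → Ω → ℝ := fun j ω => (∫ s in Set.Ioc (t j) (t (j+1)), C s ω)
    - 1/2 * (C (t (j+1)) ω + C (t j) ω) * (t (j+1) - t j) with hYdef
  have hrange : ∀ j, j ∈ Finset.range (J - 1) → j + 1 ≤ J - 1 := fun j hj => by
    have := Finset.mem_range.mp hj; omega
  have hXeq : ∀ ω, (∫ s in (0:ℝ)..T, B s ω) - trapezoid J t (fun j => B (t j) ω)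
      = ∑ j ∈ Finset.range (J-1), Y j ω := by
    intro ω
    have h1 : (∫ s in (0:ℝ)..T, B s ω) = ∫ s in (0:ℝ)..T, C s ω := by
      refine intervalIntegral.integral_congr fun s hs => ?_
      rw [Set.uIcc_of_le hT] at hs
      show B s ω = B (clmp T s) ω
      rw [clmp_of_mem hs]
    have h2 : (∫ s in (0:ℝ)..T, C s ω)
        = ∑ j ∈ Finset.range (J-1), ∫ s in (t j)..(t (j+1)), C s ω := by
      have h := intervalIntegral.sum_integral_adjacent_intervals (a := t) (n := J-1)
        (μ := volume) (f := fun s => C s ω)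
        (fun k hk => (hcontC ω).intervalIntegrable _ _)
      rw [ht0, htJ] at h
      exact h.symm
    have h4 : trapezoid J t (fun j => B (t j) ω)
        = ∑ j ∈ Finset.range (J-1), 1/2 * (C (t (j+1)) ω + C (t j) ω) * (t (j+1) - t j) := by
      rw [trapezoid, Finset.mul_sum]
      refine Finset.sum_congr rfl fun j hj => ?_
      rw [hCnode (j+1) (hrange j hj) ω, hCnode j (by have := hrange j hj; omega) ω]
      ring
    rw [h1, h2, h4, ← Finset.sum_sub_distrib]
    refine Finset.sum_congr rfl fun j hj => ?_
    rw [hYdef]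
    simp only
    rw [intervalIntegral.integral_of_le (hmono j (hrange j hj)).le]
  have iA : ∀ j : ℕ, Integrable (fun ω => ∫ s in Set.Ioc (t j) (t (j+1)), C s ω) P :=
    fun j => core_intA hT hmeasC hIntC hIntMulC hMeanC hCovC _ _
  have iZ : ∀ j : ℕ, Integrable
      (fun ω => 1/2 * (C (t (j+1)) ω + C (t j) ω) * (t (j+1) - t j)) P :=
    fun j => (((hIntC _).add (hIntC _)).const_mul (1/2)).mul_const _
  have iY : ∀ j, Integrable (Y j) P := by
    intro j
    rw [hYdef]
    exact (iA j).sub (iZ j)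
  have hEY : ∀ j : ℕ, ∫ ω, Y j ω ∂P = 0 := by
    intro j
    simp only [hYdef]
    rw [integral_sub (iA j) (iZ j), core_swap0 hT hmeasC hIntC hIntMulC hMeanC hCovC,
      MeasureTheory.integral_mul_const, MeasureTheory.integral_const_mul, integral_add (hIntC _) (hIntC _),
      hMeanC, hMeanC]
    ring
  have iYY : ∀ j k : ℕ, Integrable (fun ω => Y j ω * Y k ω) P := by
    intro j k
    simp only [hYdef]
    exact core_intYY hT hmeasC hIntC hIntMulC hMeanC hCovC _ _ _ _
  have hCov2 : ∀ j k, j ∈ Finset.range (J-1) → k ∈ Finset.range (J-1) → j < k →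
      ∫ ω, Y j ω * Y k ω ∂P = 0 := by
    intro j k hj hk hjk
    simp only [hYdef]
    rw [core_cov_clean hT hmeasC hIntC hIntMulC hMeanC hCovC
      (hnode j (by have := hrange j hj; omega)) (hnode (j+1) (hrange j hj))
      (hnode k (by have := hrange k hk; omega)) (hnode (k+1) (hrange k hk))
      (hmono j (hrange j hj)).le (hmono k (hrange k hk)).le]
    exact calc_off (hmono j (hrange j hj)).le
      (htle (j+1) k (by omega) (by have := hrange k hk; omega))
      (hmono k (hrange k hk)).le
  have hdiag : ∀ j, j ∈ Finset.range (J-1) →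
      ∫ ω, Y j ω * Y j ω ∂P = (t (j+1) - t j) ^ 3 / 12 := by
    intro j hj
    simp only [hYdef]
    rw [core_cov_clean hT hmeasC hIntC hIntMulC hMeanC hCovC
      (hnode j (by have := hrange j hj; omega)) (hnode (j+1) (hrange j hj))
      (hnode j (by have := hrange j hj; omega)) (hnode (j+1) (hrange j hj))
      (hmono j (hrange j hj)).le (hmono j (hrange j hj)).le]
    exact calc_diag (hmono j (hrange j hj)).le
  constructor
  · rw [integral_congr_ae (Filter.Eventually.of_forall hXeq),
      integral_finset_sum _ (fun j _ => iY j)]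
    exact Finset.sum_eq_zero fun j _ => hEY j
  · have hsq : ∀ ω, ((∫ s in (0:ℝ)..T, B s ω) - trapezoid J t (fun j => B (t j) ω)) ^ 2
        = ∑ j ∈ Finset.range (J-1), ∑ k ∈ Finset.range (J-1), Y j ω * Y k ω := by
      intro ω
      rw [hXeq ω, sq, Finset.sum_mul_sum]
    rw [integral_congr_ae (Filter.Eventually.of_forall hsq),
      integral_finset_sum _ (fun j _ => integrable_finset_sum _ (fun k _ => iYY j k))]
    have hout : ∀ j ∈ Finset.range (J-1),
        (∫ ω, ∑ k ∈ Finset.range (J-1), Y j ω * Y k ω ∂P) = (t (j+1) - t j) ^ 3 / 12 := by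
      intro j hj
      rw [integral_finset_sum _ (fun k _ => iYY j k),
        Finset.sum_eq_single_of_mem j hj (fun k hk hkj => ?_)]
      · exact hdiag j hj
      rcases lt_or_gt_of_ne hkj with h | h
      · rw [integral_congr_ae (Filter.Eventually.of_forall fun ω =>
          mul_comm (Y j ω) (Y k ω))]
        exact hCov2 k j hk hj h
      · exact hCov2 j k hj hk h
    rw [Finset.sum_congr rfl hout, Finset.mul_sum]
    exact Finset.sum_congr rfl fun j _ => by ring
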